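/- For every integer k ≥ 0 define the polynomial U_k(t) = Σ_{j=0}^{k} C(2k,2j)·(1−t)^{2k−2j}·(−4t)^{j}. Then for all integers k ≥ 0 and all real t, U_{k+2}(t) = 2(t² − 6t + 1)·U_{k+1}(t) − (1+t)⁴·U_k(t). -/
import Mathlib


/-- The polynomial `U_k(t) = Σ_{j=0}^{k} C(2k,2j) (1−t)^{2k−2j} (−4t)^j`. -/
noncomputable def Upoly (k : ℕ) (t : ℝ) : ℝ :=
  ∑ j ∈ Finset.range (k+1),
    ((2*k).choose (2*j) : ℝ) * (1-t)^(2*k-2*j) * (-4*t)^j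

private lemma even_sum {M : Type*} [AddCommMonoid M] (F : ℕ → M)
    (h : ∀ m, F (2*m+1) = 0) (n : ℕ) :
    ∑ m ∈ Finset.range (2*n+1), F m = ∑ j ∈ Finset.range (n+1), F (2*j) := by
  induction n with
  | zero => simp
  | succ n ih =>
    have h1 : 2*(n+1)+1 = (2*n+1)+1+1 := by ring
    rw [h1, Finset.sum_range_succ, Finset.sum_range_succ, ih, h n,
      Finset.sum_range_succ (fun j => F (2*j)) (n+1)]
    norm_num
    ring_nf

private lemma pair_pow (a s : ℂ) (k : ℕ) :
    (a+s)^(2*k) + (a-s)^(2*k)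
      = 2 * ∑ j ∈ Finset.range (k+1),
          ((2*k).choose (2*j) : ℂ) * a^(2*k-2*j) * (s^2)^j := by
  have h1 : a + s = s + a := by ring
  have h2 : a - s = -s + a := by ring
  rw [h1, h2, add_pow, add_pow, ← Finset.sum_add_distrib]
  rw [even_sum (fun m => s ^ m * a ^ (2*k - m) * ((2*k).choose m : ℂ)
      + (-s) ^ m * a ^ (2*k - m) * ((2*k).choose m : ℂ))
      (by intro m; have : (-s)^(2*m+1) = -(s^(2*m+1)) := Odd.neg_pow ⟨m, by ring⟩ s
          simp only [this]; ring) k]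
  rw [Finset.mul_sum]
  refine Finset.sum_congr rfl fun j _ => ?_
  have h3 : (-s)^(2*j) = s^(2*j) := Even.neg_pow ⟨j, by ring⟩ s
  rw [h3, pow_mul s 2 j]
  ring

private lemma Upoly_closed (k : ℕ) (t : ℝ) (s : ℂ) (hs : s^2 = -4*(t:ℂ)) :
    ((Upoly k t : ℝ) : ℂ)
      = (((1-(t:ℂ))+s)^(2*k) + ((1-(t:ℂ))-s)^(2*k)) / 2 := by
  rw [pair_pow (1-(t:ℂ)) s k, hs]
  unfold Upoly
  push_cast
  ring

/-- For all `k ≥ 0` and all real `t`,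
`U_{k+2}(t) = 2(t² − 6t + 1) U_{k+1}(t) − (1+t)⁴ U_k(t)`. -/
theorem stmt_12 (k : ℕ) (t : ℝ) :
    Upoly (k+2) t = 2*(t^2 - 6*t + 1) * Upoly (k+1) t - (1+t)^4 * Upoly k t := by
  obtain ⟨s, hs⟩ := IsAlgClosed.exists_pow_nat_eq (-4*(t:ℂ)) (n := 2) (by norm_num)
  have key : ((Upoly (k+2) t : ℝ) : ℂ)
      = ((2*(t^2 - 6*t + 1) * Upoly (k+1) t - (1+t)^4 * Upoly k t : ℝ) : ℂ) := by
    rw [Upoly_closed (k+2) t s hs]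
    push_cast
    rw [Upoly_closed (k+1) t s hs, Upoly_closed k t s hs]
    set a : ℂ := 1 - (t:ℂ) with ha
    have hp : (a+s)^2 + (a-s)^2 = 2*((t:ℂ)^2 - 6*t + 1) := by
      rw [ha]; linear_combination 2*hs
    have hq : ((a+s)^2) * ((a-s)^2) = (1+(t:ℂ))^4 := by
      rw [ha]; linear_combination (s^2 - 4*(t:ℂ) - 2*(1-(t:ℂ))^2) * hs
    have e1 : ∀ m : ℕ, ∀ x : ℂ, x^(2*(m+1)) = (x^2)^m * x^2 := by
      intro m x; rw [← pow_succ, ← pow_mul]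
    have e2 : ∀ x : ℂ, x^(2*(k+2)) = (x^2)^k * x^2 * x^2 := by
      intro x
      rw [show 2*(k+2) = 2*(k+1)+2 by ring, pow_add, e1 k]
    rw [e2, e2, e1 k, e1 k, pow_mul ((a+s)) 2 k, pow_mul ((a-s)) 2 k]
    linear_combination ((((a+s)^2)^k * (a+s)^2 + ((a-s)^2)^k * (a-s)^2) / 2) * hp
        - ((((a+s)^2)^k + ((a-s)^2)^k) / 2) * hq
  exact_mod_cast key
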